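/- arXiv:1109.1533 — 6 statements merged into one kernel-verified Lean document; each statement's English description precedes it below -/
import Mathlib

section
/- Let X_1,...,X_n be random variables with range [0,b] such that |E[X_t | X_1,...,X_{t-1}] - μ| ≤ C for all t, where 0 < C < μ. Let S_n = X_1 + ... + X_n. Then for all a ≥ 0, P(S_n ≥ n(μ+C) + a) ≤ exp(-2(a(μ-C)/(b(μ+C)))²/n). -/
open MeasureTheory


/-- The scalar core of Hoeffding's lemma. -/
lemma hoeffding_scalar' {p : ℝ} (hp0 : 0 ≤ p) (hp1 : p ≤ 1) (u : ℝ) :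
    1 - p + p * Real.exp u ≤ Real.exp (p * u + u ^ 2 / 8) := by
  rcases eq_or_lt_of_le hp0 with h0 | hp0'
  · simp only [← h0, zero_mul, mul_zero, sub_zero, add_zero, zero_add]
    exact Real.one_le_exp (by positivity)
  set q : ℝ := 1 - p with hq
  have hq0 : 0 ≤ q := by simp [hq]; linarith
  set D : ℝ → ℝ := fun u => q + p * Real.exp u with hD
  have hDpos : ∀ u, 0 < D u := fun u => by
    have := Real.exp_pos u; simp only [hD]; nlinarith
  -- f u = p*u + u^2/8 - log (D u)
  set f : ℝ → ℝ := fun u => p * u + u ^ 2 / 8 - Real.log (D u) with hf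
  set f' : ℝ → ℝ := fun u => p + u / 4 - p * Real.exp u / D u with hf'
  have hderivD : ∀ u, HasDerivAt D (p * Real.exp u) u := fun u => by
    exact ((Real.hasDerivAt_exp u).const_mul p).const_add q
  have hderivf : ∀ u, HasDerivAt f (f' u) u := by
    intro u
    have h1 : HasDerivAt (fun u : ℝ => p * u + u ^ 2 / 8) (p + u / 4) u := by
      have := ((hasDerivAt_pow 2 u).div_const 8).const_add 0
      have h2 : HasDerivAt (fun u : ℝ => p * u) p u := by
        simpa using (hasDerivAt_id u).const_mul p
      exact (h2.add ((hasDerivAt_pow 2 u).div_const 8)).congr_deriv (by ring)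
    have h3 : HasDerivAt (fun u => Real.log (D u)) (p * Real.exp u / D u) u :=
      (hderivD u).log (hDpos u).ne'
    exact h1.sub h3
  set f'' : ℝ → ℝ := fun u => 1 / 4 - q * (p * Real.exp u) / (D u) ^ 2 with hf''
  have hderivf' : ∀ u, HasDerivAt f' (f'' u) u := by
    intro u
    have h1 : HasDerivAt (fun u : ℝ => p + u / 4) (1 / 4) u := by
      simpa using ((hasDerivAt_id u).div_const 4).const_add p
    have h2 : HasDerivAt (fun u => p * Real.exp u / D u)
        ((p * Real.exp u * D u - p * Real.exp u * (p * Real.exp u)) / (D u) ^ 2) u :=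
      ((Real.hasDerivAt_exp u).const_mul p).div (hderivD u) (hDpos u).ne'
    have heq : (p * Real.exp u * D u - p * Real.exp u * (p * Real.exp u)) / (D u) ^ 2
        = q * (p * Real.exp u) / (D u) ^ 2 := by
      rw [hD]; ring_nf
    rw [heq] at h2
    exact h1.sub h2
  have hf''nonneg : ∀ u, 0 ≤ f'' u := by
    intro u
    have hDu := hDpos u
    have he := Real.exp_pos u
    rw [hf'']
    rw [sub_nonneg, div_le_div_iff₀ (by positivity) (by norm_num)]
    have : 0 ≤ (q - p * Real.exp u) ^ 2 := sq_nonneg _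
    simp only [hD] at hDu ⊢
    nlinarith
  have hf'mono : Monotone f' := by
    apply monotone_of_deriv_nonneg
    · exact fun u => (hderivf' u).differentiableAt
    · intro u; rw [(hderivf' u).deriv]; exact hf''nonneg u
  have hf'0 : f' 0 = 0 := by
    simp [hf', hD, hq]
  have hfnonneg : ∀ u, 0 ≤ f u := by
    have hf0 : f 0 = 0 := by simp [hf, hD, hq]
    intro u
    have hcont : ContinuousOn f Set.univ :=
      fun x _ => ((hderivf x).differentiableAt.continuousAt).continuousWithinAt
    rcases le_or_gt 0 u with h | h
    · have hm : MonotoneOn f (Set.Ici 0) := by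
        apply monotoneOn_of_deriv_nonneg (convex_Ici 0) (hcont.mono (Set.subset_univ _))
        · intro x hx
          exact ((hderivf x).differentiableAt).differentiableWithinAt
        · intro x hx
          rw [(hderivf x).deriv, ← hf'0]
          exact hf'mono (le_of_lt (by simpa using hx))
      have := hm Set.self_mem_Ici h h
      rwa [hf0] at this
    · have ham : AntitoneOn f (Set.Iic 0) := by
        apply antitoneOn_of_deriv_nonpos (convex_Iic 0) (hcont.mono (Set.subset_univ _))
        · intro x hx
          exact ((hderivf x).differentiableAt).differentiableWithinAt
        · intro x hx
          rw [(hderivf x).deriv, ← hf'0]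
          exact hf'mono (le_of_lt (by simpa using hx))
      have := ham (le_of_lt h) Set.self_mem_Iic (le_of_lt h)
      rwa [hf0] at this
  have hlog : Real.log (D u) ≤ p * u + u ^ 2 / 8 := by
    have := hfnonneg u; simp only [hf] at this; linarith
  have hfinal : D u ≤ Real.exp (p * u + u ^ 2 / 8) := by
    rw [← Real.exp_log (hDpos u)]
    exact Real.exp_le_exp.mpr hlog
  exact hfinal


/-- Convexity: for `x ∈ [0,b]`, `exp (l*x) ≤ 1 + (x/b)*(exp (l*b) - 1)`. -/
lemma exp_le_linear_of_mem_Icc' {b l x : ℝ} (hb : 0 < b) (hx : x ∈ Set.Icc 0 b) :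
    Real.exp (l * x) ≤ 1 + x / b * (Real.exp (l * b) - 1) := by
  obtain ⟨hx0, hxb⟩ := hx
  have key := convexOn_exp.2 (Set.mem_univ 0) (Set.mem_univ (l * b))
    (show (0:ℝ) ≤ 1 - x / b by rw [sub_nonneg]; exact div_le_one_of_le₀ hxb hb.le)
    (show (0:ℝ) ≤ x / b by positivity) (by ring)
  simp only [smul_eq_mul, mul_zero, zero_add, Real.exp_zero, mul_one] at key
  have hxx : x / b * (l * b) = l * x := by field_simp
  rw [hxx] at key
  linarith
lemma integrable_of_bdd' {Ω : Type*} [MeasurableSpace Ω] {ℙ : Measure Ω} [IsFiniteMeasure ℙ]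
    {f : Ω → ℝ} {M : ℝ} (hf : Measurable f) (h : ∀ ω, ‖f ω‖ ≤ M) : Integrable f ℙ :=
  ⟨hf.aestronglyMeasurable, HasFiniteIntegral.of_bounded (Filter.Eventually.of_forall h)⟩

/-- MGF bound along the filtration. -/
lemma mgf_bound' {Ω : Type*} [mΩ : MeasurableSpace Ω] (ℙ : Measure Ω) [IsProbabilityMeasure ℙ]
    (n : ℕ) (X : Fin n → Ω → ℝ) (b ν : ℝ) (hb : 0 < b)
    (hmeas : ∀ t, Measurable (X t))
    (hrange : ∀ t ω, X t ω ∈ Set.Icc (0 : ℝ) b)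
    (hcondle : ∀ t : Fin n, ∀ᵐ ω ∂ℙ,
      (ℙ[X t | ⨆ i : {i : Fin n // (i : ℕ) < (t : ℕ)},
          MeasurableSpace.comap (X i.1) inferInstance]) ω ≤ ν)
    (l : ℝ) (hl : 0 ≤ l) (k : ℕ) (hk : k ≤ n) :
    ∫ ω, Real.exp (l * ∑ t ∈ Finset.univ.filter (fun t : Fin n => (t : ℕ) < k), X t ω) ∂ℙ
      ≤ Real.exp (l * ν + l ^ 2 * b ^ 2 / 8) ^ k := by
  set B : ℝ := Real.exp (l * ν + l ^ 2 * b ^ 2 / 8) with hB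
  have hBpos : 0 < B := Real.exp_pos _
  -- basic bounds on partial sums
  have hSnn : ∀ (s : Finset (Fin n)) ω, 0 ≤ ∑ t ∈ s, X t ω := fun s ω =>
    Finset.sum_nonneg fun t _ => (hrange t ω).1
  have hSub : ∀ (s : Finset (Fin n)) ω, ∑ t ∈ s, X t ω ≤ n * b := by
    intro s ω
    calc ∑ t ∈ s, X t ω ≤ ∑ t ∈ s, b := Finset.sum_le_sum fun t _ => (hrange t ω).2
      _ = s.card * b := by rw [Finset.sum_const, nsmul_eq_mul]
      _ ≤ n * b := by
          have : (s.card : ℝ) ≤ n := by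
            exact_mod_cast (s.card_le_univ.trans_eq (by simp))
          exact mul_le_mul_of_nonneg_right this hb.le
  have hexpint : ∀ (s : Finset (Fin n)),
      Integrable (fun ω => Real.exp (l * ∑ t ∈ s, X t ω)) ℙ := by
    intro s
    apply integrable_of_bdd' (M := Real.exp (l * (n * b)))
    · exact Real.measurable_exp.comp ((Finset.measurable_sum s fun t _ => hmeas t).const_mul l)
    · intro ω
      rw [Real.norm_eq_abs, abs_of_pos (Real.exp_pos _)]
      exact Real.exp_le_exp.mpr (mul_le_mul_of_nonneg_left (hSub s ω) hl)
  induction k with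
  | zero =>
      simp only [Nat.not_lt_zero, Finset.filter_false, Finset.sum_empty, mul_zero,
        Real.exp_zero, pow_zero]
      simp
  | succ k ih =>
      have hkn : k < n := hk
      have ihk := ih (le_of_lt hkn)
      set t₀ : Fin n := ⟨k, hkn⟩ with ht₀
      set S : Ω → ℝ := fun ω => ∑ t ∈ Finset.univ.filter (fun t : Fin n => (t : ℕ) < k), X t ω
        with hS
      set F : Ω → ℝ := fun ω => Real.exp (l * S ω) with hF
      set g : Ω → ℝ := fun ω => Real.exp (l * X t₀ ω) with hg
      -- splitting the sum
      have hsplit : (Finset.univ.filter (fun t : Fin n => (t : ℕ) < k + 1))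
          = insert t₀ (Finset.univ.filter (fun t : Fin n => (t : ℕ) < k)) := by
        ext t
        simp only [Finset.mem_filter, Finset.mem_univ, true_and, Finset.mem_insert]
        constructor
        · intro h
          rcases Nat.lt_succ_iff_lt_or_eq.mp h with h | h
          · exact Or.inr h
          · exact Or.inl (Fin.ext h)
        · rintro (h | h)
          · rw [h]; exact Nat.lt_succ_self k
          · exact Nat.lt_succ_of_lt h
      have ht₀nm : t₀ ∉ Finset.univ.filter (fun t : Fin n => (t : ℕ) < k) := by
        simp [ht₀]
      -- integrability (established before G enters the context)
      have hFint : Integrable F ℙ := hexpint _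
      have hgint : Integrable g ℙ := by
        apply integrable_of_bdd' (M := Real.exp (l * b))
        · exact Real.measurable_exp.comp ((hmeas t₀).const_mul l)
        · intro ω
          rw [Real.norm_eq_abs, abs_of_pos (Real.exp_pos _)]
          exact Real.exp_le_exp.mpr (mul_le_mul_of_nonneg_left (hrange t₀ ω).2 hl)
      have hFgint : Integrable (F * g) ℙ := by
        apply integrable_of_bdd' (M := Real.exp (l * (n * b)) * Real.exp (l * b))
        · exact (Real.measurable_exp.comp
            (((Finset.measurable_sum _ fun t _ => hmeas t).const_mul l))).mul
            (Real.measurable_exp.comp ((hmeas t₀).const_mul l))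
        · intro ω
          rw [Pi.mul_apply, Real.norm_eq_abs, abs_mul, abs_of_pos (Real.exp_pos _),
            abs_of_pos (Real.exp_pos _)]
          apply mul_le_mul _ _ (Real.exp_pos _).le (Real.exp_pos _).le
          · exact Real.exp_le_exp.mpr (mul_le_mul_of_nonneg_left (hSub _ ω) hl)
          · exact Real.exp_le_exp.mpr (mul_le_mul_of_nonneg_left (hrange t₀ ω).2 hl)
      have hXint : Integrable (X t₀) ℙ :=
        integrable_of_bdd' (M := b) (hmeas t₀) fun ω => by
          rw [Real.norm_eq_abs, abs_of_nonneg (hrange t₀ ω).1]; exact (hrange t₀ ω).2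
      set c : ℝ := (Real.exp (l * b) - 1) / b with hc
      have hlinint : Integrable (fun ω => 1 + c * X t₀ ω) ℙ :=
        (integrable_const 1).add (hXint.const_mul c)
      -- the sub-σ-algebra
      set G : MeasurableSpace Ω := ⨆ i : {i : Fin n // (i : ℕ) < (t₀ : ℕ)},
        MeasurableSpace.comap (X i.1) inferInstance with hG
      have hGle : G ≤ mΩ :=
        iSup_le fun i => measurable_iff_comap_le.mp (hmeas i.1)
      -- measurability of F w.r.t. G
      have hSG : Measurable[G] S := by
        apply Finset.measurable_sum
        intro t ht
        have hti : (t : ℕ) < (t₀ : ℕ) := by exact (by simpa using ht : (t : ℕ) < k)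
        exact measurable_iff_comap_le.mpr
          (le_iSup (fun i : {i : Fin n // (i : ℕ) < (t₀ : ℕ)} =>
            MeasurableSpace.comap (X i.1) inferInstance) ⟨t, hti⟩)
      have hFG : Measurable[G] F := Real.measurable_exp.comp (hSG.const_mul l)
      -- key conditional bound
      have h1 : ℙ[g | G] ≤ᵐ[ℙ] ℙ[fun ω => 1 + c * X t₀ ω | G] := by
        apply condExp_mono hgint hlinint
        apply Filter.Eventually.of_forall
        intro ω
        have := exp_le_linear_of_mem_Icc' (l := l) hb (hrange t₀ ω)
        have heq : X t₀ ω / b * (Real.exp (l * b) - 1) = c * X t₀ ω := by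
          rw [hc]; ring
        rw [heq] at this
        exact this
      have h2 : ℙ[fun ω => 1 + c * X t₀ ω | G]
          =ᵐ[ℙ] fun ω => 1 + c * (ℙ[X t₀ | G]) ω := by
        have heqf : (fun ω => 1 + c * X t₀ ω) = (fun _ => (1:ℝ)) + c • (X t₀) := by
          funext ω; simp [smul_eq_mul]
        rw [heqf]
        have hadd := condExp_add (μ := ℙ) (m := G) (integrable_const (1:ℝ)) (hXint.smul c)
        rw [condExp_const hGle (1:ℝ)] at hadd
        refine hadd.trans ?_
        have hsm := condExp_smul (μ := ℙ) (m := G) c (X t₀)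
        filter_upwards [hsm] with ω hw
        simp only [Pi.add_apply, Pi.smul_apply, smul_eq_mul] at hw ⊢
        rw [hw]
      have hm0 : 0 ≤ᵐ[ℙ] ℙ[X t₀ | G] :=
        condExp_nonneg (Filter.Eventually.of_forall fun ω => (hrange t₀ ω).1)
      have hmb : ℙ[X t₀ | G] ≤ᵐ[ℙ] fun _ => b := by
        have h := condExp_mono (m := G) hXint (integrable_const b)
          (Filter.Eventually.of_forall fun ω => (hrange t₀ ω).2)
        rwa [condExp_const hGle b] at h
      have hmν := hcondle t₀
      have hkey : ∀ᵐ ω ∂ℙ, (ℙ[g | G]) ω ≤ B := by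
        filter_upwards [h1, h2, hm0, hmb, hmν] with ω hw1 hw2 hw0 hwb hwv
        set m : ℝ := (ℙ[X t₀ | G]) ω with hmm
        have hp0 : 0 ≤ m / b := div_nonneg hw0 hb.le
        have hp1 : m / b ≤ 1 := div_le_one_of_le₀ hwb hb.le
        have hsc := hoeffding_scalar' hp0 hp1 (l * b)
        have heq1 : 1 - m / b + m / b * Real.exp (l * b) = 1 + c * m := by
          rw [hc]; field_simp; ring
        have heq2 : m / b * (l * b) = l * m := by field_simp
        rw [heq1, heq2] at hsc
        have hle2 : Real.exp (l * m + (l * b) ^ 2 / 8) ≤ B := by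
          rw [hB]
          apply Real.exp_le_exp.mpr
          have : l * m ≤ l * ν := mul_le_mul_of_nonneg_left hwv hl
          nlinarith [sq_nonneg (l*b)]
        calc (ℙ[g | G]) ω ≤ 1 + c * m := hw2 ▸ hw1
          _ ≤ B := le_trans hsc hle2
      -- pull-out property
      have hpull : ℙ[F * g | G] =ᵐ[ℙ] F * ℙ[g | G] :=
        condExp_mul_of_stronglyMeasurable_left hFG.stronglyMeasurable hFgint hgint
      -- putting it together
      have hstep : ∫ ω, F ω * g ω ∂ℙ ≤ B * ∫ ω, F ω ∂ℙ := by
        have e0 : ∫ ω, (ℙ[F * g | G]) ω ∂ℙ = ∫ ω, (F * g) ω ∂ℙ :=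
          integral_condExp (μ := ℙ) (f := F * g) hGle
        have e1 : ∫ ω, F ω * g ω ∂ℙ = ∫ ω, (ℙ[F * g | G]) ω ∂ℙ := by
          rw [e0]; rfl
        rw [e1]
        have hmono : ℙ[F * g | G] ≤ᵐ[ℙ] fun ω => F ω * B := by
          filter_upwards [hpull, hkey] with ω hw1 hw2
          rw [hw1, Pi.mul_apply]
          exact mul_le_mul_of_nonneg_left hw2 (Real.exp_pos _).le
        calc ∫ ω, (ℙ[F * g | G]) ω ∂ℙ ≤ ∫ ω, F ω * B ∂ℙ :=
              integral_mono_ae integrable_condExp (hFint.mul_const B) hmono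
          _ = B * ∫ ω, F ω ∂ℙ := by rw [integral_mul_const]; ring
      have hFsum : ∀ ω, Real.exp (l * ∑ t ∈ Finset.univ.filter
          (fun t : Fin n => (t : ℕ) < k + 1), X t ω) = F ω * g ω := by
        intro ω
        rw [hsplit, Finset.sum_insert ht₀nm, hF, hg, hS]
        rw [mul_add, Real.exp_add]
        ring
      calc ∫ ω, Real.exp (l * ∑ t ∈ Finset.univ.filter
            (fun t : Fin n => (t : ℕ) < k + 1), X t ω) ∂ℙ
          = ∫ ω, F ω * g ω ∂ℙ := by simp_rw [hFsum]
        _ ≤ B * ∫ ω, F ω ∂ℙ := hstep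
        _ ≤ B * B ^ k := mul_le_mul_of_nonneg_left ihk hBpos.le
        _ = B ^ (k + 1) := by ring

/-- Generalized Chernoff-Hoeffding bound (upper tail) for random variables
whose conditional means may drift within `C` of `μ`. -/
theorem generalized_chernoff_hoeffding_upper
    {Ω : Type*} [MeasurableSpace Ω] (ℙ : Measure Ω) [IsProbabilityMeasure ℙ]
    (n : ℕ) (X : Fin n → Ω → ℝ) (b μ C : ℝ)
    (hb : 0 < b) (hC : 0 < C) (hCμ : C < μ)
    (hmeas : ∀ t, Measurable (X t))
    (hrange : ∀ t ω, X t ω ∈ Set.Icc (0 : ℝ) b)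
    (hcond : ∀ t : Fin n, ∀ᵐ ω ∂ℙ,
      |(ℙ[X t | ⨆ i : {i : Fin n // (i : ℕ) < (t : ℕ)},
          MeasurableSpace.comap (X i.1) inferInstance]) ω - μ| ≤ C)
    (a : ℝ) (ha : 0 ≤ a) :
    (ℙ {ω | (n : ℝ) * (μ + C) + a ≤ ∑ t, X t ω}).toReal ≤
      Real.exp (-2 * (a * (μ - C) / (b * (μ + C)))^2 / n) := by
  set E : Set Ω := {ω | (n : ℝ) * (μ + C) + a ≤ ∑ t, X t ω} with hE
  have hle1 : (ℙ E).toReal ≤ 1 := by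
    rw [← ENNReal.toReal_one]
    exact ENNReal.toReal_mono ENNReal.one_ne_top prob_le_one
  rcases Nat.eq_zero_or_pos n with hn0 | hnpos
  · subst hn0
    simp only [Nat.cast_zero, div_zero, Real.exp_zero]
    exact hle1
  have hn : (0:ℝ) < n := by exact_mod_cast hnpos
  set ν : ℝ := μ + C with hν
  have hνpos : 0 < ν := by rw [hν]; linarith
  have hμC : 0 < μ - C := by linarith
  set l : ℝ := 4 * a / (n * b ^ 2) with hl'
  have hl : 0 ≤ l := by positivity
  -- conditional means are at most ν
  have hcondle : ∀ t : Fin n, ∀ᵐ ω ∂ℙ,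
      (ℙ[X t | ⨆ i : {i : Fin n // (i : ℕ) < (t : ℕ)},
          MeasurableSpace.comap (X i.1) inferInstance]) ω ≤ ν := by
    intro t
    filter_upwards [hcond t] with ω hw
    have := (abs_le.mp hw).2
    rw [hν]; linarith
  set B : ℝ := Real.exp (l * ν + l ^ 2 * b ^ 2 / 8) with hB
  -- the mgf bound for the full sum
  have hfull : (Finset.univ.filter (fun t : Fin n => (t : ℕ) < n)) = Finset.univ := by
    ext t; simp [t.isLt]
  have hmgf : ∫ ω, Real.exp (l * ∑ t, X t ω) ∂ℙ ≤ B ^ n := by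
    have := mgf_bound' ℙ n X b ν hb hmeas hrange hcondle l hl n le_rfl
    rwa [hfull] at this
  -- integrability of the exponential of the full sum
  have hSmeas : Measurable fun ω => ∑ t, X t ω :=
    Finset.measurable_sum _ fun t _ => hmeas t
  have hint : Integrable (fun ω => Real.exp (l * ∑ t, X t ω)) ℙ := by
    apply integrable_of_bdd' (M := Real.exp (l * (n * b)))
    · exact Real.measurable_exp.comp (hSmeas.const_mul l)
    · intro ω
      rw [Real.norm_eq_abs, abs_of_pos (Real.exp_pos _)]
      apply Real.exp_le_exp.mpr
      apply mul_le_mul_of_nonneg_left _ hl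
      calc ∑ t, X t ω ≤ ∑ t : Fin n, b := Finset.sum_le_sum fun t _ => (hrange t ω).2
        _ = n * b := by simp [mul_comm]
  have hEmeas : MeasurableSet E := measurableSet_le measurable_const hSmeas
  -- Markov / Chernoff step
  have key : (ℙ E).toReal * Real.exp (l * ((n:ℝ) * ν + a)) ≤ B ^ n := by
    calc (ℙ E).toReal * Real.exp (l * ((n:ℝ) * ν + a))
        = ∫ _ω in E, Real.exp (l * ((n:ℝ) * ν + a)) ∂ℙ := by
          rw [setIntegral_const, smul_eq_mul]; rfl
      _ ≤ ∫ ω in E, Real.exp (l * ∑ t, X t ω) ∂ℙ := by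
          apply setIntegral_mono_on (integrableOn_const (measure_lt_top ℙ E).ne)
            hint.integrableOn hEmeas
          intro ω hω
          exact Real.exp_le_exp.mpr (mul_le_mul_of_nonneg_left hω hl)
      _ ≤ ∫ ω, Real.exp (l * ∑ t, X t ω) ∂ℙ :=
          setIntegral_le_integral hint
            (Filter.Eventually.of_forall fun ω => (Real.exp_pos _).le)
      _ ≤ B ^ n := hmgf
  have key2 : (ℙ E).toReal ≤ B ^ n * Real.exp (-(l * ((n:ℝ) * ν + a))) := by
    rw [Real.exp_neg, mul_comm (B ^ n), ← div_eq_inv_mul, le_div_iff₀ (Real.exp_pos _)]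
    exact key
  have hBn : B ^ n * Real.exp (-(l * ((n:ℝ) * ν + a)))
      = Real.exp ((n:ℝ) * (l * ν + l ^ 2 * b ^ 2 / 8) - l * ((n:ℝ) * ν + a)) := by
    rw [hB, ← Real.exp_nat_mul, ← Real.exp_add]
    ring_nf
  have hcomp : (n:ℝ) * (l * ν + l ^ 2 * b ^ 2 / 8) - l * ((n:ℝ) * ν + a)
      = -2 * a ^ 2 / ((n:ℝ) * b ^ 2) := by
    rw [hl']
    field_simp
    ring
  have hfinal : Real.exp (-2 * a ^ 2 / ((n:ℝ) * b ^ 2))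
      ≤ Real.exp (-2 * (a * (μ - C) / (b * (μ + C)))^2 / n) := by
    apply Real.exp_le_exp.mpr
    rw [div_le_div_iff₀ (by positivity) hn]
    have h1 : (a * (μ - C) / (b * (μ + C))) ^ 2 ≤ (a / b) ^ 2 := by
      apply pow_le_pow_left₀ (by positivity)
      rw [div_le_div_iff₀ (by positivity) hb]
      nlinarith [mul_nonneg (mul_nonneg ha hb.le) hC.le]
    have h2 : (a / b) ^ 2 = a ^ 2 / b ^ 2 := by rw [div_pow]
    rw [h2] at h1
    have hb2 : (0:ℝ) < b ^ 2 := by positivity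
    have h1' := mul_le_mul_of_nonneg_right h1 hb2.le
    rw [div_mul_cancel₀ _ hb2.ne'] at h1'
    nlinarith [mul_le_mul_of_nonneg_right h1' hn.le]
  calc (ℙ E).toReal ≤ B ^ n * Real.exp (-(l * ((n:ℝ) * ν + a))) := key2
    _ = Real.exp (-2 * a ^ 2 / ((n:ℝ) * b ^ 2)) := by rw [hBn, hcomp]
    _ ≤ Real.exp (-2 * (a * (μ - C) / (b * (μ + C)))^2 / n) := hfinal
end

section
/- For every integer α ≥ 1 and real L > 0, and every real t ≥ e^{4α/L}, it holds that 1 + √(L ln t / (4α+1)) − √(L ln t / (α−1)) < 0 whenever α ≥ 2. Equivalently, √(L ln t/(α−1)) > 1 + √(L ln t/(4α+1)) for t ≥ e^{4α/L} and α ≥ 2. -/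
set_option maxHeartbeats 1000000


/-- The under-played arm's UCB index exceeds the over-played arm's index. -/
theorem ucb_contradiction (α : ℕ) (L : ℝ) (hα : 2 ≤ α) (hL : 0 < L)
    (t : ℝ) (ht : t ≥ Real.exp (4 * α / L)) :
    1 + Real.sqrt (L * Real.log t / (4 * α + 1)) -
      Real.sqrt (L * Real.log t / ((α : ℝ) - 1)) < 0 := by
  set a : ℝ := (α : ℝ) with ha_def
  have ha : (2:ℝ) ≤ a := by rw [ha_def]; exact_mod_cast hα
  have ht0 : 0 < t := lt_of_lt_of_le (Real.exp_pos _) ht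
  have hlog : 4 * a / L ≤ Real.log t := by
    rw [Real.le_log_iff_exp_le ht0]; exact ht
  set X : ℝ := L * Real.log t with hX_def
  have hX : 4 * a ≤ X := by
    have h := mul_le_mul_of_nonneg_left hlog hL.le
    calc 4 * a = L * (4 * a / L) := by field_simp
      _ ≤ X := h
  have hXpos : 0 < X := by linarith
  set p := Real.sqrt (a - 1) with hp_def
  set q := Real.sqrt (4 * a + 1) with hq_def
  set r := Real.sqrt a with hr_def
  set u := Real.sqrt X with hu_def
  have hp2 : p ^ 2 = a - 1 := by
    rw [hp_def, Real.sq_sqrt]; linarith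
  have hq2 : q ^ 2 = 4 * a + 1 := by
    rw [hq_def, Real.sq_sqrt]; linarith
  have hr2 : r ^ 2 = a := by
    rw [hr_def, Real.sq_sqrt]; linarith
  have hu2 : u ^ 2 = X := by
    rw [hu_def, Real.sq_sqrt]; linarith
  have hp0 : 0 ≤ p := Real.sqrt_nonneg _
  have hq0 : 0 ≤ q := Real.sqrt_nonneg _
  have hr0 : 0 ≤ r := Real.sqrt_nonneg _
  have hu0 : 0 ≤ u := Real.sqrt_nonneg _
  have hppos : 0 < p := by nlinarith
  have hqpos : 0 < q := by nlinarith
  have hrp : p < r := by nlinarith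
  have hq2p : 2 * p < q := by nlinarith
  have hu2r : 2 * r ≤ u := by nlinarith
  have hrw : Real.sqrt (X / (4 * a + 1)) = u / q := by
    rw [hu_def, hq_def, Real.sqrt_div hXpos.le]
  have hrw2 : Real.sqrt (X / (a - 1)) = u / p := by
    rw [hu_def, hp_def, Real.sqrt_div hXpos.le]
  rw [hrw, hrw2]
  have hrpos : 0 < r := lt_trans hppos hrp
  have h1 : 2 * r * (q - p) ≤ u * (q - p) :=
    mul_le_mul_of_nonneg_right hu2r (by linarith)
  have h2 : r * q < 2 * r * (q - p) := by nlinarith [mul_pos hrpos (show (0:ℝ) < q - 2 * p by linarith)]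
  have h3 : p * q < r * q := by nlinarith [mul_pos (show (0:ℝ) < r - p by linarith) hqpos]
  have key : p * q + u * p - u * q < 0 := by nlinarith [h1, h2, h3]
  have heq : 1 + u / q - u / p = (p * q + u * p - u * q) / (p * q) := by
    field_simp
  rw [heq]
  exact div_neg_of_neg_of_pos key (mul_pos hppos hqpos)
end

section
/- Let U_1 > U_2, C_1, C_2 ≥ 0, K ≥ 1 with U_1 − U_2 − (C_1+C_2)/K > 0 and U_2 − C_2/K > 0. Set c_{t,s} = √(L ln t / s) with L > 0 and λ(n) = ⌈L(1 + (U_2+C_2/K)/(U_2−C_2/K))² ln n / (U_1 − U_2 − (C_1+C_2)/K)²⌉. Then for all integers s ≥ λ(n) and all t ≤ n with t ≥ 1, the inequality U_1 − C_1/K < U_2 + C_2/K + (1 + (U_2+C_2/K)/(U_2−C_2/K))·c_{t,s} is false. -/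
/-- Once the suboptimal policy is sampled `λ(n)` times, the overlap condition fails. -/
theorem overlap_condition_fails (U1 U2 C1 C2 K L : ℝ)
    (hU : U1 > U2) (hC1 : 0 ≤ C1) (hC2 : 0 ≤ C2) (hK : 1 ≤ K)
    (hD : U1 - U2 - (C1 + C2) / K > 0) (hU2K : U2 - C2 / K > 0) (hL : 0 < L)
    (n : ℕ) (hn : 1 ≤ n) :
    ∀ s : ℕ, (s : ℝ) ≥ ((⌈L * (1 + (U2 + C2 / K) / (U2 - C2 / K)) ^ 2 *
        Real.log n / (U1 - U2 - (C1 + C2) / K) ^ 2⌉ : ℤ) : ℝ) →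
      ∀ t : ℕ, 1 ≤ t → t ≤ n →
        ¬ (U1 - C1 / K < U2 + C2 / K +
            (1 + (U2 + C2 / K) / (U2 - C2 / K)) *
              Real.sqrt (L * Real.log t / s)) := by
  intro s hs t ht htn
  set A : ℝ := 1 + (U2 + C2 / K) / (U2 - C2 / K) with hA
  set Δ : ℝ := U1 - U2 - (C1 + C2) / K with hΔ
  have hK0 : (0:ℝ) < K := lt_of_lt_of_le one_pos hK
  have hAnum : 0 ≤ U2 + C2 / K := by
    have : 0 ≤ C2 / K := div_nonneg hC2 hK0.le
    nlinarith
  have hApos : 0 < A := by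
    have h : 0 ≤ (U2 + C2 / K) / (U2 - C2 / K) := div_nonneg hAnum hU2K.le
    rw [hA]; linarith
  have hlogt : 0 ≤ Real.log t := Real.log_nonneg (by exact_mod_cast ht)
  have hlogle : Real.log t ≤ Real.log n :=
    Real.log_le_log (by exact_mod_cast ht) (by exact_mod_cast htn)
  -- main bound: A * sqrt(L log t / s) ≤ Δ
  have key : A * Real.sqrt (L * Real.log t / s) ≤ Δ := by
    rcases Nat.eq_zero_or_pos s with hs0 | hspos
    · simp [hs0]
      positivity
    · have hsR : (0:ℝ) < s := by exact_mod_cast hspos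
      have hceil : L * A ^ 2 * Real.log n / Δ ^ 2 ≤ (s : ℝ) :=
        le_trans (Int.le_ceil _) hs
      have harg : L * Real.log t / s ≤ Δ ^ 2 / A ^ 2 := by
        rw [div_le_div_iff₀ hsR (by positivity)]
        have h1 : L * A ^ 2 * Real.log n ≤ s * Δ ^ 2 := by
          rw [div_le_iff₀ (by positivity)] at hceil
          nlinarith
        nlinarith [mul_le_mul_of_nonneg_left hlogle hL.le]
      have hsq : Real.sqrt (L * Real.log t / s) ≤ Δ / A := by
        have : Real.sqrt (L * Real.log t / s) ≤ Real.sqrt (Δ ^ 2 / A ^ 2) :=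
          Real.sqrt_le_sqrt harg
        rwa [← div_pow, Real.sqrt_sq (by positivity)] at this
      calc A * Real.sqrt (L * Real.log t / s) ≤ A * (Δ / A) :=
            mul_le_mul_of_nonneg_left hsq hApos.le
        _ = Δ := by rw [mul_comm, div_mul_cancel₀ _ hApos.ne']
  push_neg
  have hsplit : (C1 + C2) / K = C1 / K + C2 / K := add_div _ _ _
  have : U2 + C2 / K + Δ = U1 - C1 / K := by rw [hΔ, hsplit]; ring
  linarith
end

section
/- For the N=2 channel problem with transition probabilities 0 < p_{01}, p_{11} < 1, the steady-state average reward of the stay-on-1/switch-on-0 policy π_1 equals U_1(P) = p_{01}²/(1−p_{11}+p_{01})² + (1−p_{01}+p_{11})·p_{01}(1−p_{11})/(1−p_{11}+p_{01})². -/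
/-- Steady-state average reward of the stay-on-1/switch-on-0 policy `π₁`
for two identical two-state Markov channels: the stationary probability,
under the induced 4-state joint chain on (sensed state, other state),
of sensing a 1 equals the stated closed form. -/
theorem steady_state_reward_pi1 (p01 p11 : ℝ)
    (h01 : 0 < p01) (h01' : p01 < 1) (h11 : 0 < p11) (h11' : p11 < 1)
    (p : Fin 2 → Fin 2 → ℝ)
    (hp : p = ![![1 - p01, p01], ![1 - p11, p11]])
    -- transition kernel of the joint chain under policy π₁ :
    -- stay on the sensed channel after a 1, switch after a 0
    (Q : (Fin 2 × Fin 2) → (Fin 2 × Fin 2) → ℝ)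
    (hQ : ∀ i j : Fin 2 × Fin 2,
      Q i j = if i.1 = 1 then p i.1 j.1 * p i.2 j.2 else p i.1 j.2 * p i.2 j.1)
    (σ : (Fin 2 × Fin 2) → ℝ)
    (hσpos : ∀ i, 0 ≤ σ i) (hσsum : ∑ i, σ i = 1)
    (hσstat : ∀ j, σ j = ∑ i, σ i * Q i j) :
    σ (1, 0) + σ (1, 1) =
      p01 ^ 2 / (1 - p11 + p01) ^ 2 +
        (1 - p01 + p11) * p01 * (1 - p11) / (1 - p11 + p01) ^ 2 := by
  subst hp
  have e1 := hσstat (0,0)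
  have e2 := hσstat (0,1)
  have e3 := hσstat (1,0)
  have e4 := hσstat (1,1)
  simp [hQ, Fintype.sum_prod_type, Fin.sum_univ_two] at e1 e2 e3 e4
  have e5 := hσsum
  rw [Fintype.sum_prod_type] at e5
  simp [Fin.sum_univ_two] at e5
  have hd11 : σ (1,1) = σ 1 := rfl
  rw [hd11]
  -- nonzero facts
  have hq : (1 - p11 + p01) ≠ 0 := by nlinarith
  have hq2 : (1 - p01 + p11) ≠ 0 := by nlinarith
  have hD0 : (1 + p01^2 - p11^2) ≠ 0 := by nlinarith
  -- b - c = (x - y)(b + c)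
  have hv : σ (0,1) - σ (1,0) = (p01 - p11) * (σ (0,1) + σ (1,0)) := by
    linear_combination e2 - e3
  -- D0 * d = x^2 + x(y-x) u
  have hd : (1 + p01^2 - p11^2) * σ 1
      = p01^2 + p01*(p11 - p01)*(σ (0,1) + σ (1,0)) := by
    linear_combination e4 + p01^2 * e5
  -- q^2 (1-x+y) u = 2x(1-y)(1-x+y)
  have hu_pre : ((1 + p01 - p11)^2 * (σ (0,1) + σ (1,0))) * (1 - p01 + p11)
      = (2 * p01 * (1 - p11)) * (1 - p01 + p11) := by
    linear_combination (-(1 + p01^2 - p11^2)) * e1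
      + (1 + p01^2 - p11^2) * (2*p01 - p01^2) * e5
      + (-((1 - p11)^2 + 2*p01 - p01^2)) * hd
  have hu : (1 + p01 - p11)^2 * (σ (0,1) + σ (1,0)) = 2 * p01 * (1 - p11) :=
    mul_right_cancel₀ hq2 hu_pre
  -- q^2 c = (1-x+y) x (1-y)
  have hc : (1 + p01 - p11)^2 * σ (1,0) = (1 - p01 + p11) * p01 * (1 - p11) := by
    linear_combination ((1 - p01 + p11)/2) * hu - ((1 + p01 - p11)^2/2) * hv
  -- q^2 d = x^2
  have hd2 : (1 + p01 - p11)^2 * σ 1 = p01^2 := by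
    have h6 : (1 + p01^2 - p11^2) * ((1 + p01 - p11)^2 * σ 1)
        = (1 + p01^2 - p11^2) * p01^2 := by
      linear_combination (1 + p01 - p11)^2 * hd + p01*(p11 - p01) * hu
    exact mul_left_cancel₀ hD0 h6
  field_simp
  linear_combination hc + hd2
end

section
/- For the N=2 channel problem with 0 < p_{01}, p_{11} < 1, the steady-state average reward of the stay-on-0/switch-on-1 policy π_2 equals U_2(P) = p_{01}²/(1−p_{11}+p_{01})² + p_{01}(1−p_{11})/(1−p_{11}+p_{01}). -/
/-- Steady-state average reward of the stay-on-0/switch-on-1 policy `π₂`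
for two identical two-state Markov channels: the stationary probability,
under the induced 4-state joint chain on (sensed state, other state),
of sensing a 1 equals the stated closed form. -/
theorem steady_state_reward_pi2 (p01 p11 : ℝ)
    (h01 : 0 < p01) (h01' : p01 < 1) (h11 : 0 < p11) (h11' : p11 < 1)
    (p : Fin 2 → Fin 2 → ℝ)
    (hp : p = ![![1 - p01, p01], ![1 - p11, p11]])
    -- transition kernel of the joint chain under policy π₂ :
    -- stay on the sensed channel after a 0, switch after a 1
    (Q : (Fin 2 × Fin 2) → (Fin 2 × Fin 2) → ℝ)
    (hQ : ∀ i j : Fin 2 × Fin 2,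
      Q i j = if i.1 = 1 then p i.1 j.2 * p i.2 j.1 else p i.1 j.1 * p i.2 j.2)
    (σ : (Fin 2 × Fin 2) → ℝ)
    (hσpos : ∀ i, 0 ≤ σ i) (hσsum : ∑ i, σ i = 1)
    (hσstat : ∀ j, σ j = ∑ i, σ i * Q i j) :
    σ (1, 0) + σ (1, 1) =
      p01 ^ 2 / (1 - p11 + p01) ^ 2 +
        p01 * (1 - p11) / (1 - p11 + p01) := by
  have hD : (0:ℝ) < 1 - p11 + p01 := by linarith
  have hD' : (1:ℝ) - p11 + p01 ≠ 0 := ne_of_gt hD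
  have hE : (1:ℝ) + p11 - p01 ≠ 0 := by nlinarith
  have hsum := hσsum
  have h00 := hσstat (0, 0)
  have h10 := hσstat (1, 0)
  have h11 := hσstat (1, 1)
  simp only [Fintype.sum_prod_type, Fin.sum_univ_two, hQ, hp] at hsum h00 h10 h11
  norm_num [Matrix.cons_val_zero, Matrix.cons_val_one, Matrix.head_cons] at h00 h10 h11
  -- σ (1,1) = (p01 / (1 - p11 + p01))^2, in cleared-denominator form
  have hd' : σ (1, 1) * (1 - p11 + p01) ^ 2 * (1 + p11 - p01)
      = p01 ^ 2 * (1 + p11 - p01) := by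
    linear_combination (p01 * (p01 - p11)) * h00 +
      (1 + p01 - p11 - p01 ^ 2 + p01 * p11) * h11 +
      (p01 ^ 2 * (1 + p11 - p01)) * hsum
  have hd : σ (1, 1) * (1 - p11 + p01) ^ 2 = p01 ^ 2 := by
    have := mul_right_cancel₀ hE hd'
    linarith
  have key : (σ (1, 0) + σ (1, 1)) * (1 - p11 + p01) ^ 2
      = p01 ^ 2 + p01 * (1 - p11) * (1 - p11 + p01) := by
    linear_combination ((1 - p11 + p01) ^ 2) * h10 + ((1 - p11 + p01) ^ 2) * h11 +
      (p01 * (1 - p11 + p01) ^ 2) * hsum + (p11 - p01) * hd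
  rw [div_add_div _ _ (pow_ne_zero 2 hD') hD', eq_div_iff (by positivity)]
  linear_combination (1 - p11 + p01) * key
end

section
/- If U_1, U_2 are given by U_1(P) = p_{01}²/(1−p_{11}+p_{01})² + (1−p_{01}+p_{11})p_{01}(1−p_{11})/(1−p_{11}+p_{01})² and U_2(P) = p_{01}²/(1−p_{11}+p_{01})² + p_{01}(1−p_{11})/(1−p_{11}+p_{01}), with 0 < p_{01}, p_{11} < 1, then U_1(P) > U_2(P) if and only if p_{11} > p_{01}, and U_1(P) = U_2(P) if and only if p_{11} = p_{01}. -/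
/-- Comparison of the steady-state rewards of the two myopic policies. -/
theorem reward_comparison (p01 p11 U1 U2 : ℝ)
    (h01 : 0 < p01) (h01' : p01 < 1) (h11 : 0 < p11) (h11' : p11 < 1)
    (hU1 : U1 = p01 ^ 2 / (1 - p11 + p01) ^ 2 +
      (1 - p01 + p11) * p01 * (1 - p11) / (1 - p11 + p01) ^ 2)
    (hU2 : U2 = p01 ^ 2 / (1 - p11 + p01) ^ 2 +
      p01 * (1 - p11) / (1 - p11 + p01)) :
    (U1 > U2 ↔ p11 > p01) ∧ (U1 = U2 ↔ p11 = p01) := by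
  have hd : (0:ℝ) < 1 - p11 + p01 := by linarith
  have hd2 : (0:ℝ) < (1 - p11 + p01) ^ 2 := by positivity
  have hc : (0:ℝ) < 2 * p01 * (1 - p11) / (1 - p11 + p01) ^ 2 := div_pos (by nlinarith) hd2
  have hdiff : U1 - U2 = (2 * p01 * (1 - p11) / (1 - p11 + p01) ^ 2) * (p11 - p01) := by
    subst hU1 hU2
    field_simp
    ring
  constructor
  · constructor
    · intro h
      by_contra hle
      push_neg at hle
      have : (2 * p01 * (1 - p11) / (1 - p11 + p01) ^ 2) * (p11 - p01) ≤ 0 :=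
        mul_nonpos_of_nonneg_of_nonpos hc.le (by linarith)
      linarith [hdiff]
    · intro h
      have := mul_pos hc (by linarith : (0:ℝ) < p11 - p01)
      linarith [hdiff]
  · constructor
    · intro h
      have h0 : (2 * p01 * (1 - p11) / (1 - p11 + p01) ^ 2) * (p11 - p01) = 0 := by
        linarith [hdiff]
      rcases mul_eq_zero.mp h0 with h1 | h2
      · exact absurd h1 hc.ne'
      · linarith
    · intro h
      have : p11 - p01 = 0 := by linarith
      rw [this, mul_zero] at hdiff
      linarith
end
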